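/- Let N, L be positive integers, u_1,…,u_L ∈ ℂ^N nonzero vectors, y_1,…,y_L ≥ 0, γ > 0, μ ≥ 0. Then there exists a constant C ≥ 0 such that for every N×N complex Hermitian positive semidefinite matrix Q and every N×N complex Hermitian matrix Δ, the function t ↦ J_μ(Q + tΔ) is twice differentiable at t = 0 and its second derivative at t = 0 is at most C·‖Δ‖_F². -/

import Mathlib

open Matrix BigOperators
open scoped ComplexOrder

noncomputable section

namespace MmW

variable {N L : ℕ}

/-- Squared Euclidean norm of a complex vector. -/
def nsq (v : Fin N → ℂ) : ℝ := ∑ i, Complex.normSq (v i)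

/-- The rank-one matrix `v v*`. -/
def outer (v : Fin N → ℂ) : Matrix (Fin N) (Fin N) ℂ := Matrix.vecMulVec v (star v)

/-- `λ_ℓ(Q) = u_ℓ* (Q + γ⁻¹ I) u_ℓ` (real part; it is real for Hermitian `Q`). -/
def lam (u : Fin L → Fin N → ℂ) (γ : ℝ) (Q : Matrix (Fin N) (Fin N) ℂ) (ℓ : Fin L) : ℝ :=
  (star (u ℓ) ⬝ᵥ ((Q + ((γ : ℂ))⁻¹ • (1 : Matrix (Fin N) (Fin N) ℂ)) *ᵥ u ℓ)).re

/-- The regularized ML objective `J_μ(Q) = Σ_ℓ [log λ_ℓ(Q) + y_ℓ/λ_ℓ(Q)] + μ·Tr(Q)`. -/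
def Jmu (u : Fin L → Fin N → ℂ) (y : Fin L → ℝ) (γ μ : ℝ)
    (Q : Matrix (Fin N) (Fin N) ℂ) : ℝ :=
  (∑ ℓ, (Real.log (lam u γ Q ℓ) + y ℓ / lam u γ Q ℓ)) + μ * Q.trace.re

/-- The `(L+1)×(L+1)` real matrix `A`, indexed by `0,…,L`:
`A_{00} = N`, `A_{0j} = ‖u_j‖²`, `A_{ℓ0} = ‖u_ℓ‖²`, `A_{ℓj} = |u_ℓ* u_j|²`. -/
def Amat (N : ℕ) (u : Fin L → Fin N → ℂ) : Matrix (Fin (L+1)) (Fin (L+1)) ℝ :=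
  fun i j =>
    Fin.cases
      (Fin.cases (N : ℝ) (fun j' => nsq (u j')) j)
      (fun i' => Fin.cases (nsq (u i')) (fun j' => Complex.normSq (star (u i') ⬝ᵥ u j')) j)
      i

/-- The separable objective
`f(z) = μ z_0 + Σ_ℓ [log(z_ℓ + γ⁻¹‖u_ℓ‖²) + y_ℓ/(z_ℓ + γ⁻¹‖u_ℓ‖²)]`. -/
def fobj (u : Fin L → Fin N → ℂ) (y : Fin L → ℝ) (γ μ : ℝ) (z : Fin (L+1) → ℝ) : ℝ :=
  μ * z 0 + ∑ ℓ, (Real.log (z ℓ.succ + γ⁻¹ * nsq (u ℓ)) + y ℓ / (z ℓ.succ + γ⁻¹ * nsq (u ℓ)))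

/-- The matrix `Q = Σ_ℓ q_ℓ u_ℓ u_ℓ* + q_0 I` built from `q ∈ ℝ^{L+1}`. -/
def Qof (u : Fin L → Fin N → ℂ) (q : Fin (L+1) → ℝ) : Matrix (Fin N) (Fin N) ℂ :=
  (∑ ℓ, ((q ℓ.succ : ℝ) : ℂ) • outer (u ℓ)) + ((q 0 : ℝ) : ℂ) • 1

/-- Frobenius norm `‖M‖_F = (Tr(M*M))^{1/2}`. -/
def frob (M : Matrix (Fin N) (Fin N) ℂ) : ℝ := Real.sqrt ((Mᴴ * M).trace.re)

/-- The gradient matrix `S(Q) = Σ_ℓ [1/λ_ℓ(Q) − y_ℓ/λ_ℓ(Q)²] u_ℓ u_ℓ* + μ I`. -/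
def Smat (u : Fin L → Fin N → ℂ) (y : Fin L → ℝ) (γ μ : ℝ)
    (Q : Matrix (Fin N) (Fin N) ℂ) : Matrix (Fin N) (Fin N) ℂ :=
  (∑ ℓ, (((lam u γ Q ℓ)⁻¹ - y ℓ / (lam u γ Q ℓ) ^ 2 : ℝ) : ℂ) • outer (u ℓ))
    + ((μ : ℝ) : ℂ) • 1

/-- The gradient `∇f(z)`: component `0` is `μ`, component `ℓ ≥ 1` is
`1/(z_ℓ + γ⁻¹‖u_ℓ‖²) − y_ℓ/(z_ℓ + γ⁻¹‖u_ℓ‖²)²`. -/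
def gradf (u : Fin L → Fin N → ℂ) (y : Fin L → ℝ) (γ μ : ℝ) (z : Fin (L+1) → ℝ) :
    Fin (L+1) → ℝ :=
  Fin.cases μ
    (fun ℓ => (z ℓ.succ + γ⁻¹ * nsq (u ℓ))⁻¹ - y ℓ / (z ℓ.succ + γ⁻¹ * nsq (u ℓ)) ^ 2)



/-! ### Auxiliary lemmas for `stmt8` -/

lemma nsq_nonneg' (v : Fin N → ℂ) : 0 ≤ nsq v :=
  Finset.sum_nonneg fun _ _ => Complex.normSq_nonneg _

lemma nsq_pos' (v : Fin N → ℂ) (hv : v ≠ 0) : 0 < nsq v := by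
  obtain ⟨i, hi⟩ := Function.ne_iff.mp hv
  exact Finset.sum_pos' (fun _ _ => Complex.normSq_nonneg _)
    ⟨i, Finset.mem_univ i, Complex.normSq_pos.mpr hi⟩

lemma frob_nonneg' (M : Matrix (Fin N) (Fin N) ℂ) : 0 ≤ frob M := Real.sqrt_nonneg _

lemma frob_sq' (M : Matrix (Fin N) (Fin N) ℂ) :
    (frob M) ^ 2 = ∑ p : Fin N × Fin N, ‖M p.1 p.2‖ ^ 2 := by
  have h : (Mᴴ * M).trace.re = ∑ p : Fin N × Fin N, ‖M p.1 p.2‖ ^ 2 := by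
    simp [Matrix.trace, Matrix.mul_apply, Matrix.diag, Matrix.conjTranspose_apply,
      Complex.re_sum, ← Complex.normSq_eq_conj_mul_self, Complex.normSq_eq_norm_sq,
      Fintype.sum_prod_type, ← Complex.ofReal_pow, Complex.ofReal_re]
    rw [Finset.sum_comm]
  rw [frob, Real.sq_sqrt]
  · exact h
  · rw [h]; positivity

lemma quad_abs_le' (v : Fin N → ℂ) (M : Matrix (Fin N) (Fin N) ℂ) :
    |(star v ⬝ᵥ M *ᵥ v).re| ≤ nsq v * frob M := by
  have e1 : star v ⬝ᵥ M *ᵥ v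
      = ∑ p : Fin N × Fin N, (starRingEnd ℂ) (v p.1) * (M p.1 p.2 * v p.2) := by
    simp [dotProduct, mulVec, Finset.mul_sum, Fintype.sum_prod_type]
  have e2 : |(star v ⬝ᵥ M *ᵥ v).re|
      ≤ ∑ p : Fin N × Fin N, ‖M p.1 p.2‖ * (‖v p.1‖ * ‖v p.2‖) := by
    rw [e1]
    refine (Complex.abs_re_le_norm _).trans ?_
    refine (norm_sum_le _ _).trans_eq (Finset.sum_congr rfl fun p _ => ?_)
    simp [_root_.map_mul]
    ring
  have CS := Finset.sum_mul_sq_le_sq_mul_sq Finset.univ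
    (fun p : Fin N × Fin N => ‖M p.1 p.2‖) (fun p => ‖v p.1‖ * ‖v p.2‖)
  have hn : ∑ p : Fin N × Fin N, (‖v p.1‖ * ‖v p.2‖) ^ 2 = (nsq v) ^ 2 := by
    simp [mul_pow, Fintype.sum_prod_type, ← Finset.sum_mul, ← Finset.mul_sum, nsq,
      Complex.normSq_eq_norm_sq, sq]
    rw [Finset.sum_mul_sum]
    exact Finset.sum_congr rfl fun _ _ => Finset.sum_congr rfl fun _ _ => by ring
  refine e2.trans ?_
  have h0 : 0 ≤ ∑ p : Fin N × Fin N, ‖M p.1 p.2‖ * (‖v p.1‖ * ‖v p.2‖) := by positivity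
  have hsq : (∑ p : Fin N × Fin N, ‖M p.1 p.2‖ * (‖v p.1‖ * ‖v p.2‖)) ^ 2
      ≤ (nsq v * frob M) ^ 2 := by
    calc _ ≤ (∑ p : Fin N × Fin N, ‖M p.1 p.2‖ ^ 2)
            * ∑ p : Fin N × Fin N, (‖v p.1‖ * ‖v p.2‖) ^ 2 := CS
    _ = (nsq v * frob M) ^ 2 := by rw [hn, ← frob_sq']; ring
  calc (∑ p : Fin N × Fin N, ‖M p.1 p.2‖ * (‖v p.1‖ * ‖v p.2‖))
      = Real.sqrt ((∑ p : Fin N × Fin N, ‖M p.1 p.2‖ * (‖v p.1‖ * ‖v p.2‖)) ^ 2) :=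
        (Real.sqrt_sq h0).symm
    _ ≤ Real.sqrt ((nsq v * frob M) ^ 2) := Real.sqrt_le_sqrt hsq
    _ = nsq v * frob M := Real.sqrt_sq (mul_nonneg (nsq_nonneg' v) (frob_nonneg' M))

lemma lam_linear' (u : Fin L → Fin N → ℂ) (γ : ℝ) (Q Δ : Matrix (Fin N) (Fin N) ℂ)
    (t : ℝ) (ℓ : Fin L) :
    lam u γ (Q + t • Δ) ℓ = lam u γ Q ℓ + t * (star (u ℓ) ⬝ᵥ Δ *ᵥ u ℓ).re := by
  simp [lam, add_mulVec, dotProduct_add, smul_mulVec, dotProduct_smul,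
    Complex.smul_re, add_assoc, add_comm, add_left_comm]

lemma lam_decomp' (u : Fin L → Fin N → ℂ) (γ : ℝ) (Q : Matrix (Fin N) (Fin N) ℂ) (ℓ : Fin L) :
    lam u γ Q ℓ = (star (u ℓ) ⬝ᵥ Q *ᵥ u ℓ).re + γ⁻¹ * nsq (u ℓ) := by
  have h2 : star (u ℓ) ⬝ᵥ u ℓ = ((nsq (u ℓ) : ℝ) : ℂ) := by
    simp [nsq, dotProduct, Complex.normSq_eq_conj_mul_self]
  have h3 : (star (u ℓ) ⬝ᵥ (((γ:ℂ))⁻¹ • (1 : Matrix (Fin N) (Fin N) ℂ)) *ᵥ u ℓ)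
      = ((γ⁻¹ * nsq (u ℓ) : ℝ) : ℂ) := by
    rw [smul_mulVec, one_mulVec, dotProduct_smul, h2]
    simp [smul_eq_mul, Complex.ofReal_mul, Complex.ofReal_inv]
  simp [lam, add_mulVec, dotProduct_add, h3]

lemma calc1' (a b yl t : ℝ) (h : (a + t * b) ≠ 0) :
    HasDerivAt (fun s => Real.log (a + s * b) + yl / (a + s * b))
      (b / (a + t * b) - yl * b / (a + t * b) ^ 2) t := by
  have hl : HasDerivAt (fun s : ℝ => a + s * b) b t := by
    simpa using ((hasDerivAt_id t).mul_const b).const_add a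
  have h1 := hl.log h
  have h2 := (hasDerivAt_const t yl).div hl h
  convert h1.add h2 using 1
  · rfl
  · rfl
  · rfl
  field_simp
  ring

lemma calc2' (a b yl t : ℝ) (h : (a + t * b) ≠ 0) :
    HasDerivAt (fun s => b / (a + s * b) - yl * b / (a + s * b) ^ 2)
      (-(b ^ 2) / (a + t * b) ^ 2 + 2 * yl * b ^ 2 / (a + t * b) ^ 3) t := by
  have hl : HasDerivAt (fun s : ℝ => a + s * b) b t := by
    simpa using ((hasDerivAt_id t).mul_const b).const_add a
  have h1 := (hasDerivAt_const t b).div hl h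
  have h2 := (hasDerivAt_const t (yl * b)).div (hl.pow 2) (pow_ne_zero 2 h)
  convert h1.sub h2 using 1
  · rfl
  · rfl
  · rfl
  simp only [Pi.pow_apply]
  rw [show (2:ℕ) - 1 = 1 from rfl]
  field_simp
  ring

/-- there is a constant `C ≥ 0` such that for every Hermitian PSD `Q`
and every Hermitian `Δ`, the function `t ↦ J_μ(Q + tΔ)` is twice differentiable at
`t = 0` with second derivative at most `C·‖Δ‖_F²`. -/
theorem stmt8 (N L : ℕ) (hN : 0 < N) (hL : 0 < L)
    (u : Fin L → Fin N → ℂ) (hu : ∀ ℓ, u ℓ ≠ 0)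
    (y : Fin L → ℝ) (hy : ∀ ℓ, 0 ≤ y ℓ)
    (γ : ℝ) (hγ : 0 < γ) (μ : ℝ) (hμ : 0 ≤ μ) :
    ∃ C : ℝ, 0 ≤ C ∧
      ∀ (Q Δ : Matrix (Fin N) (Fin N) ℂ), Q.PosSemidef → Δ.IsHermitian →
        DifferentiableAt ℝ (fun t : ℝ => Jmu u y γ μ (Q + t • Δ)) 0 ∧
        DifferentiableAt ℝ (deriv (fun t : ℝ => Jmu u y γ μ (Q + t • Δ))) 0 ∧
        deriv (deriv (fun t : ℝ => Jmu u y γ μ (Q + t • Δ))) 0 ≤ C * (frob Δ) ^ 2 := by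
  refine ⟨∑ ℓ, 2 * y ℓ * γ ^ 3 / nsq (u ℓ), ?_, ?_⟩
  · refine Finset.sum_nonneg fun ℓ _ => div_nonneg ?_ (nsq_nonneg' (u ℓ))
    have := hy ℓ; positivity
  intro Q Δ hQ hΔ
  set a : Fin L → ℝ := fun ℓ => lam u γ Q ℓ with ha_def
  set b : Fin L → ℝ := fun ℓ => (star (u ℓ) ⬝ᵥ Δ *ᵥ u ℓ).re with hb_def
  have hnsq : ∀ ℓ, 0 < nsq (u ℓ) := fun ℓ => nsq_pos' (u ℓ) (hu ℓ)
  have halow : ∀ ℓ, γ⁻¹ * nsq (u ℓ) ≤ a ℓ := by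
    intro ℓ
    rw [ha_def]
    simp only
    rw [lam_decomp']
    have hre : 0 ≤ (star (u ℓ) ⬝ᵥ Q *ᵥ u ℓ).re := by
      have := hQ.dotProduct_mulVec_nonneg (u ℓ)
      exact (Complex.le_def.mp this).1
    linarith
  have ha0 : ∀ ℓ, 0 < a ℓ := fun ℓ =>
    lt_of_lt_of_le (by have := hnsq ℓ; positivity) (halow ℓ)
  have hb2 : ∀ ℓ, (b ℓ) ^ 2 ≤ (nsq (u ℓ)) ^ 2 * (frob Δ) ^ 2 := by
    intro ℓ
    have h := quad_abs_le' (u ℓ) Δ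
    calc (b ℓ) ^ 2 = |b ℓ| ^ 2 := (sq_abs _).symm
      _ ≤ (nsq (u ℓ) * frob Δ) ^ 2 := by
          apply pow_le_pow_left₀ (abs_nonneg _) h
      _ = (nsq (u ℓ)) ^ 2 * (frob Δ) ^ 2 := by ring
  have hfun : (fun t : ℝ => Jmu u y γ μ (Q + t • Δ))
      = fun t => (∑ ℓ, (Real.log (a ℓ + t * b ℓ) + y ℓ / (a ℓ + t * b ℓ)))
          + μ * (Q.trace.re + t * Δ.trace.re) := by
    funext t
    have htr : (Q + t • Δ).trace.re = Q.trace.re + t * Δ.trace.re := by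
      simp [Matrix.trace_add, Matrix.trace_smul, Complex.smul_re]
    simp only [Jmu, lam_linear', htr, ha_def, hb_def]
  rw [hfun]
  set F : ℝ → ℝ := fun t =>
      (∑ ℓ, (Real.log (a ℓ + t * b ℓ) + y ℓ / (a ℓ + t * b ℓ)))
        + μ * (Q.trace.re + t * Δ.trace.re) with hF_def
  set D : ℝ → ℝ := fun t =>
      (∑ ℓ, (b ℓ / (a ℓ + t * b ℓ) - y ℓ * b ℓ / (a ℓ + t * b ℓ) ^ 2))
        + μ * Δ.trace.re with hD_def
  have hderivF : ∀ t : ℝ, (∀ ℓ, 0 < a ℓ + t * b ℓ) → HasDerivAt F (D t) t := by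
    intro t ht
    have hsum : HasDerivAt
        (fun s => ∑ ℓ, (Real.log (a ℓ + s * b ℓ) + y ℓ / (a ℓ + s * b ℓ)))
        (∑ ℓ, (b ℓ / (a ℓ + t * b ℓ) - y ℓ * b ℓ / (a ℓ + t * b ℓ) ^ 2)) t :=
      HasDerivAt.fun_sum fun ℓ _ => calc1' (a ℓ) (b ℓ) (y ℓ) t (ht ℓ).ne'
    have hlin : HasDerivAt (fun s : ℝ => μ * (Q.trace.re + s * Δ.trace.re))
        (μ * Δ.trace.re) t := by
      simpa using (((hasDerivAt_id t).mul_const Δ.trace.re).const_add Q.trace.re).const_mul μ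
    exact hsum.add hlin
  have hpos : ∀ᶠ t in nhds (0:ℝ), ∀ ℓ, 0 < a ℓ + t * b ℓ := by
    rw [Filter.eventually_all]
    intro ℓ
    have hc : ContinuousAt (fun t : ℝ => a ℓ + t * b ℓ) 0 := by fun_prop
    have h0 : (0:ℝ) < a ℓ + 0 * b ℓ := by simpa using ha0 ℓ
    exact hc.eventually (eventually_gt_nhds h0)
  have hF0 : HasDerivAt F (D 0) 0 := hderivF 0 (by intro ℓ; simpa using ha0 ℓ)
  have hev : deriv F =ᶠ[nhds (0:ℝ)] D := hpos.mono fun t ht => (hderivF t ht).deriv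
  set s0 : ℝ := ∑ ℓ, (-(b ℓ ^ 2) / (a ℓ) ^ 2 + 2 * y ℓ * (b ℓ) ^ 2 / (a ℓ) ^ 3) with hs0_def
  have hD0 : HasDerivAt D s0 0 := by
    have hsum : HasDerivAt
        (fun s => ∑ ℓ, (b ℓ / (a ℓ + s * b ℓ) - y ℓ * b ℓ / (a ℓ + s * b ℓ) ^ 2))
        (∑ ℓ, (-(b ℓ ^ 2) / (a ℓ + 0 * b ℓ) ^ 2
          + 2 * y ℓ * (b ℓ) ^ 2 / (a ℓ + 0 * b ℓ) ^ 3)) 0 :=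
      HasDerivAt.fun_sum fun ℓ _ =>
        calc2' (a ℓ) (b ℓ) (y ℓ) 0 (by simpa using (ha0 ℓ).ne')
    have : HasDerivAt D (∑ ℓ, (-(b ℓ ^ 2) / (a ℓ + 0 * b ℓ) ^ 2
          + 2 * y ℓ * (b ℓ) ^ 2 / (a ℓ + 0 * b ℓ) ^ 3)) 0 :=
      hsum.add_const (μ * Δ.trace.re)
    simpa [hs0_def] using this
  refine ⟨hF0.differentiableAt, ?_, ?_⟩
  · exact hD0.differentiableAt.congr_of_eventuallyEq hev
  · rw [Filter.EventuallyEq.deriv_eq hev, hD0.deriv]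
    have hbound : ∀ ℓ ∈ Finset.univ,
        -(b ℓ ^ 2) / (a ℓ) ^ 2 + 2 * y ℓ * (b ℓ) ^ 2 / (a ℓ) ^ 3
          ≤ 2 * y ℓ * γ ^ 3 / nsq (u ℓ) * (frob Δ) ^ 2 := by
      intro ℓ _
      have h1 : -(b ℓ ^ 2) / (a ℓ) ^ 2 ≤ 0 := by
        apply div_nonpos_of_nonpos_of_nonneg
        · simpa using sq_nonneg (b ℓ)
        · positivity
      have hc3 : (0:ℝ) < (γ⁻¹ * nsq (u ℓ)) ^ 3 := by
        have := hnsq ℓ; positivity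
      have h2 : 2 * y ℓ * (b ℓ) ^ 2 / (a ℓ) ^ 3
          ≤ 2 * y ℓ * ((nsq (u ℓ)) ^ 2 * (frob Δ) ^ 2) / (γ⁻¹ * nsq (u ℓ)) ^ 3 := by
        apply div_le_div₀
        · have := hy ℓ; positivity
        · have hyℓ := hy ℓ
          have := hb2 ℓ
          nlinarith
        · exact hc3
        · exact pow_le_pow_left₀ (le_of_lt (by have := hnsq ℓ; positivity)) (halow ℓ) 3
      have h3 : 2 * y ℓ * ((nsq (u ℓ)) ^ 2 * (frob Δ) ^ 2) / (γ⁻¹ * nsq (u ℓ)) ^ 3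
          = 2 * y ℓ * γ ^ 3 / nsq (u ℓ) * (frob Δ) ^ 2 := by
        have hne : nsq (u ℓ) ≠ 0 := (hnsq ℓ).ne'
        field_simp
      linarith [h2, h3 ▸ h2]
    calc s0 ≤ ∑ ℓ, 2 * y ℓ * γ ^ 3 / nsq (u ℓ) * (frob Δ) ^ 2 :=
          Finset.sum_le_sum hbound
      _ = (∑ ℓ, 2 * y ℓ * γ ^ 3 / nsq (u ℓ)) * (frob Δ) ^ 2 := by
          rw [Finset.sum_mul]


end MmW
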